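/- Let F be a Banach space and Ψ : [0,1] × F → F a continuous map satisfying: (AP1) for every φ ∈ F the equation Ψ(0,x) = φ has a unique solution x₀^φ; (AP2) for every φ ∈ F the Fréchet derivative D_xΨ(0,x₀^φ) is a continuous linear isomorphism of F, and sup_{φ ∈ F} ‖(D_xΨ(0,x₀^φ))⁻¹‖ < ∞; (AP3) sup_{x ∈ F} ‖Ψ(ε,x) − Ψ(0,x)‖ → 0 as ε → 0; (AP4) Ψ(ε,·) is Fréchet differentiable for every ε ∈ [0,1] and the differentiability is uniform, i.e. lim_{δ→0} sup_{0<ε≤1} sup_{0<‖x−y‖≤δ} ‖Ψ(ε,y) − Ψ(ε,x) − D_xΨ(ε,x)(y−x)‖ / ‖x−y‖ = 0; (AP5) lim_{ε→0} limsup_{δ→0} sup_{‖x−y‖<δ} ‖D_xΨ(ε,x) − D_xΨ(0,y)‖ = 0. Then there exist ε₀ ∈ (0,1) and δ > 0 such that for every ε ∈ (0,ε₀] and every φ ∈ F there exists a unique x_ε^φ in the closed ball {x : ‖x − x₀^φ‖ ≤ δ} with Ψ(ε, x_ε^φ) = φ. -/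

import Mathlib

open Filter Set

/-- uniform implicit function theorem. `F` is a real Banach space,
`Ψ : [0,1] × F → F` is continuous, and under the uniform conditions
AP1–AP5 there exist `ε₀ ∈ (0,1)` and `δ > 0` such that for every `ε ∈ (0,ε₀]`
and every `φ ∈ F` the equation `Ψ(ε,x) = φ` has a unique solution in the closed
ball of radius `δ` around `x₀^φ`. -/
theorem uniform_implicit_function_theorem
    {F : Type*} [NormedAddCommGroup F] [NormedSpace ℝ F] [CompleteSpace F]
    (Ψ : ℝ → F → F)
    (hcont : ContinuousOn (fun q : ℝ × F => Ψ q.1 q.2) (Set.Icc (0:ℝ) 1 ×ˢ Set.univ))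
    -- AP1: for every φ, the equation Ψ(0,x) = φ has the unique solution x₀ φ
    (x₀ : F → F)
    (hAP1 : ∀ φ : F, Ψ 0 (x₀ φ) = φ ∧ ∀ x : F, Ψ 0 x = φ → x = x₀ φ)
    -- the Fréchet derivative of Ψ(ε,·)
    (DΨ : ℝ → F → (F →L[ℝ] F))
    (hderiv : ∀ ε ∈ Set.Icc (0:ℝ) 1, ∀ x : F, HasFDerivAt (Ψ ε) (DΨ ε x) x)
    -- AP2: D_xΨ(0, x₀ φ) is an isomorphism with uniformly bounded inverse
    (Dinv : F → (F →L[ℝ] F))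
    (hAP2 : ∀ φ : F, (DΨ 0 (x₀ φ)).comp (Dinv φ) = ContinuousLinearMap.id ℝ F ∧
      (Dinv φ).comp (DΨ 0 (x₀ φ)) = ContinuousLinearMap.id ℝ F)
    (hAP2' : ∃ C : ℝ, ∀ φ : F, ‖Dinv φ‖ ≤ C)
    -- AP3: sup_x ‖Ψ(ε,x) − Ψ(0,x)‖ → 0 as ε → 0
    (hAP3 : ∀ η : ℝ, 0 < η → ∃ ε' : ℝ, 0 < ε' ∧
      ∀ ε : ℝ, 0 < ε → ε ≤ ε' → ∀ x : F, ‖Ψ ε x - Ψ 0 x‖ ≤ η)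
    -- AP4: the Fréchet differentiability is uniform in ε ∈ (0,1] and x
    (hAP4 : ∀ η : ℝ, 0 < η → ∃ δ : ℝ, 0 < δ ∧
      ∀ ε ∈ Set.Ioc (0:ℝ) 1, ∀ x y : F, ‖y - x‖ ≤ δ →
        ‖Ψ ε y - Ψ ε x - DΨ ε x (y - x)‖ ≤ η * ‖y - x‖)
    -- AP5: uniform continuity of the Fréchet derivative
    (hAP5 : ∀ η : ℝ, 0 < η → ∃ ε' : ℝ, 0 < ε' ∧
      ∀ ε : ℝ, 0 < ε → ε ≤ ε' → ∃ δ : ℝ, 0 < δ ∧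
        ∀ x y : F, ‖x - y‖ < δ → ‖DΨ ε x - DΨ 0 y‖ ≤ η) :
    ∃ ε₀ ∈ Set.Ioo (0:ℝ) 1, ∃ δ : ℝ, 0 < δ ∧
      ∀ ε : ℝ, 0 < ε → ε ≤ ε₀ → ∀ φ : F,
        ∃! x : F, ‖x - x₀ φ‖ ≤ δ ∧ Ψ ε x = φ := by
  classical
  obtain ⟨C₀, hC₀⟩ := hAP2'
  set C : ℝ := max C₀ 1 with hCdef
  have hC1 : (1:ℝ) ≤ C := le_max_right _ _
  have hCpos : (0:ℝ) < C := lt_of_lt_of_le one_pos hC1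
  have hCb : ∀ φ : F, ‖Dinv φ‖ ≤ C := fun φ => (hC₀ φ).trans (le_max_left _ _)
  set η : ℝ := 1 / (8 * C) with hηdef
  have hη : 0 < η := by positivity
  obtain ⟨ε₅, hε₅pos, hε₅⟩ := hAP5 η hη
  obtain ⟨δstar, hδstarpos, hδstar⟩ := hε₅ ε₅ hε₅pos le_rfl
  obtain ⟨δ₄, hδ₄pos, hδ₄⟩ := hAP4 η hη
  set δ : ℝ := min (δstar / 2) (δ₄ / 2) with hδdef
  have hδpos : 0 < δ := lt_min (by linarith) (by linarith)
  obtain ⟨ε₃, hε₃pos, hε₃⟩ := hAP3 (δ / (2 * C)) (by positivity)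
  set ε₀ : ℝ := min (min ε₃ ε₅) (1/2) with hε₀def
  have hε₀pos : 0 < ε₀ := lt_min (lt_min hε₃pos hε₅pos) (by norm_num)
  refine ⟨ε₀, ⟨hε₀pos, lt_of_le_of_lt (min_le_right _ _) (by norm_num)⟩, δ, hδpos, ?_⟩
  intro ε hεpos hεle φ
  have hεle₃ : ε ≤ ε₃ := hεle.trans ((min_le_left _ _).trans (min_le_left _ _))
  have hεle₅ : ε ≤ ε₅ := hεle.trans ((min_le_left _ _).trans (min_le_right _ _))
  have hεle1 : ε ≤ 1 := hεle.trans ((min_le_right _ _).trans (by norm_num))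
  obtain ⟨δε, hδεpos, hδε⟩ := hε₅ ε hεpos hεle₅
  -- key derivative estimate on the ball
  have hDest : ∀ x : F, ‖x - x₀ φ‖ ≤ δ → ‖DΨ ε x - DΨ 0 (x₀ φ)‖ ≤ 3 * η := by
    intro x hx
    have h1 : ‖DΨ ε x - DΨ 0 x‖ ≤ η := hδε x x (by simp [hδεpos])
    have h2 : ‖DΨ ε₅ x - DΨ 0 x‖ ≤ η := hδstar x x (by simp [hδstarpos])
    have h3 : ‖DΨ ε₅ x - DΨ 0 (x₀ φ)‖ ≤ η := by
      refine hδstar x (x₀ φ) ?_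
      calc ‖x - x₀ φ‖ ≤ δ := hx
        _ ≤ δstar / 2 := min_le_left _ _
        _ < δstar := by linarith
    calc ‖DΨ ε x - DΨ 0 (x₀ φ)‖
        = ‖(DΨ ε x - DΨ 0 x) - (DΨ ε₅ x - DΨ 0 x) + (DΨ ε₅ x - DΨ 0 (x₀ φ))‖ := by
          congr 1; abel
      _ ≤ ‖(DΨ ε x - DΨ 0 x) - (DΨ ε₅ x - DΨ 0 x)‖ + ‖DΨ ε₅ x - DΨ 0 (x₀ φ)‖ :=
          norm_add_le _ _
      _ ≤ (‖DΨ ε x - DΨ 0 x‖ + ‖DΨ ε₅ x - DΨ 0 x‖) + ‖DΨ ε₅ x - DΨ 0 (x₀ φ)‖ := by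
          gcongr; exact norm_sub_le _ _
      _ ≤ 3 * η := by linarith
  set T : F → F := fun x => x - Dinv φ (Ψ ε x - φ) with hTdef
  -- contraction estimate
  have hcontr : ∀ x y : F, ‖x - x₀ φ‖ ≤ δ → ‖y - x₀ φ‖ ≤ δ →
      ‖T y - T x‖ ≤ (1/2) * ‖y - x‖ := by
    intro x y hx hy
    have hyx : ‖y - x‖ ≤ δ₄ := by
      calc ‖y - x‖ = ‖(y - x₀ φ) - (x - x₀ φ)‖ := by congr 1; abel
        _ ≤ ‖y - x₀ φ‖ + ‖x - x₀ φ‖ := norm_sub_le _ _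
        _ ≤ δ + δ := by linarith
        _ ≤ δ₄ := by
            have : δ ≤ δ₄ / 2 := min_le_right _ _
            linarith
    have h4 : ‖Ψ ε y - Ψ ε x - DΨ ε x (y - x)‖ ≤ η * ‖y - x‖ :=
      hδ₄ ε ⟨hεpos, hεle1⟩ x y hyx
    have h5 : ‖(DΨ ε x - DΨ 0 (x₀ φ)) (y - x)‖ ≤ 3 * η * ‖y - x‖ := by
      calc ‖(DΨ ε x - DΨ 0 (x₀ φ)) (y - x)‖
          ≤ ‖DΨ ε x - DΨ 0 (x₀ φ)‖ * ‖y - x‖ := ContinuousLinearMap.le_opNorm _ _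
        _ ≤ 3 * η * ‖y - x‖ := by gcongr; exact hDest x hx
    have hid : Dinv φ (DΨ 0 (x₀ φ) (y - x)) = y - x := by
      have := (hAP2 φ).2
      calc Dinv φ (DΨ 0 (x₀ φ) (y - x))
          = ((Dinv φ).comp (DΨ 0 (x₀ φ))) (y - x) := rfl
        _ = y - x := by rw [this]; rfl
    have hT : T y - T x = Dinv φ (DΨ 0 (x₀ φ) (y - x) - (Ψ ε y - Ψ ε x)) := by
      rw [map_sub, hid]
      simp only [hTdef, map_sub]
      abel
    have hinner : ‖DΨ 0 (x₀ φ) (y - x) - (Ψ ε y - Ψ ε x)‖ ≤ 4 * η * ‖y - x‖ := by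
      calc ‖DΨ 0 (x₀ φ) (y - x) - (Ψ ε y - Ψ ε x)‖
          = ‖-(Ψ ε y - Ψ ε x - DΨ ε x (y - x)) - ((DΨ ε x - DΨ 0 (x₀ φ)) (y - x))‖ := by
            congr 1
            simp only [ContinuousLinearMap.sub_apply]
            abel
        _ ≤ ‖-(Ψ ε y - Ψ ε x - DΨ ε x (y - x))‖ + ‖(DΨ ε x - DΨ 0 (x₀ φ)) (y - x)‖ :=
            norm_sub_le _ _
        _ = ‖Ψ ε y - Ψ ε x - DΨ ε x (y - x)‖ + ‖(DΨ ε x - DΨ 0 (x₀ φ)) (y - x)‖ := by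
            rw [norm_neg]
        _ ≤ η * ‖y - x‖ + 3 * η * ‖y - x‖ := by linarith
        _ = 4 * η * ‖y - x‖ := by ring
    calc ‖T y - T x‖ = ‖Dinv φ (DΨ 0 (x₀ φ) (y - x) - (Ψ ε y - Ψ ε x))‖ := by rw [hT]
      _ ≤ ‖Dinv φ‖ * ‖DΨ 0 (x₀ φ) (y - x) - (Ψ ε y - Ψ ε x)‖ :=
          ContinuousLinearMap.le_opNorm _ _
      _ ≤ C * (4 * η * ‖y - x‖) := by
          apply mul_le_mul (hCb φ) hinner (norm_nonneg _) hCpos.le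
      _ = (1/2) * ‖y - x‖ := by
          rw [hηdef]; field_simp; ring
  -- T maps the ball to itself
  have hself : ∀ x : F, ‖x - x₀ φ‖ ≤ δ → ‖T x - x₀ φ‖ ≤ δ := by
    intro x hx
    have hfix0 : ‖T (x₀ φ) - x₀ φ‖ ≤ δ / 2 := by
      have : T (x₀ φ) - x₀ φ = -(Dinv φ (Ψ ε (x₀ φ) - φ)) := by
        simp only [hTdef]; abel
      rw [this, norm_neg]
      have hψ : ‖Ψ ε (x₀ φ) - φ‖ ≤ δ / (2 * C) := by
        have := hε₃ ε hεpos hεle₃ (x₀ φ)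
        rwa [(hAP1 φ).1] at this
      calc ‖Dinv φ (Ψ ε (x₀ φ) - φ)‖ ≤ ‖Dinv φ‖ * ‖Ψ ε (x₀ φ) - φ‖ :=
            ContinuousLinearMap.le_opNorm _ _
        _ ≤ C * (δ / (2 * C)) := mul_le_mul (hCb φ) hψ (norm_nonneg _) hCpos.le
        _ = δ / 2 := by field_simp
    have h0 : ‖(x₀ φ : F) - x₀ φ‖ ≤ δ := by simp [hδpos.le]
    calc ‖T x - x₀ φ‖ = ‖(T x - T (x₀ φ)) + (T (x₀ φ) - x₀ φ)‖ := by congr 1; abel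
      _ ≤ ‖T x - T (x₀ φ)‖ + ‖T (x₀ φ) - x₀ φ‖ := norm_add_le _ _
      _ ≤ (1/2) * ‖x - x₀ φ‖ + δ / 2 := by
          linarith [hcontr (x₀ φ) x h0 hx, hfix0]
      _ ≤ δ := by linarith
  -- fixed points of T are solutions
  have hfix_iff : ∀ x : F, T x = x ↔ Ψ ε x = φ := by
    intro x
    constructor
    · intro h
      have h' : Dinv φ (Ψ ε x - φ) = 0 := by
        have : x - Dinv φ (Ψ ε x - φ) = x := h
        have := sub_eq_self.mp this
        exact this
      have : DΨ 0 (x₀ φ) (Dinv φ (Ψ ε x - φ)) = Ψ ε x - φ := by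
        have h2 := (hAP2 φ).1
        calc DΨ 0 (x₀ φ) (Dinv φ (Ψ ε x - φ))
            = ((DΨ 0 (x₀ φ)).comp (Dinv φ)) (Ψ ε x - φ) := rfl
          _ = Ψ ε x - φ := by rw [h2]; rfl
      rw [h', map_zero] at this
      have := this.symm
      rwa [sub_eq_zero] at this
    · intro h
      simp only [hTdef, h, sub_self, map_zero, sub_zero]
  -- Banach fixed point on the closed ball
  set s : Set F := Metric.closedBall (x₀ φ) δ with hsdef
  have hmem : ∀ x : F, x ∈ s ↔ ‖x - x₀ φ‖ ≤ δ := by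
    intro x; rw [Metric.mem_closedBall, dist_eq_norm]
  have hsne : s.Nonempty := ⟨x₀ φ, Metric.mem_closedBall_self hδpos.le⟩
  haveI : Nonempty s := hsne.to_subtype
  haveI : CompleteSpace s := IsClosed.completeSpace_coe (hs := Metric.isClosed_closedBall)
  set f : s → s := fun x => ⟨T x.1, (hmem _).mpr (hself x.1 ((hmem _).mp x.2))⟩ with hfdef
  have hcw : ContractingWith (1/2 : NNReal) f := by
    constructor
    · exact one_half_lt_one
    · apply LipschitzWith.of_dist_le_mul
      intro x y
      simp only [Subtype.dist_eq, dist_eq_norm]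
      have hc : ((1/2 : NNReal) : ℝ) = 1/2 := by norm_num
      rw [hc]
      exact hcontr y.1 x.1 ((hmem _).mp y.2) ((hmem _).mp x.2)
  set z : s := ContractingWith.fixedPoint f hcw with hzdef
  have hzfix : f z = z := hcw.fixedPoint_isFixedPt
  refine ⟨z.1, ⟨(hmem _).mp z.2, ?_⟩, ?_⟩
  · have : T z.1 = z.1 := congrArg Subtype.val hzfix
    exact (hfix_iff z.1).mp this
  · rintro y ⟨hy1, hy2⟩
    have hys : y ∈ s := (hmem _).mpr hy1
    have : f ⟨y, hys⟩ = ⟨y, hys⟩ := by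
      apply Subtype.ext
      exact (hfix_iff y).mpr hy2
    have := hcw.fixedPoint_unique (f := f) (x := (⟨y, hys⟩ : s)) this
    exact congrArg Subtype.val this
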